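/- arXiv:2405.20237 — 4 statements merged into one kernel-verified Lean document; each statement's English description precedes it below -/
import Mathlib

section
/- Let O be a nonzero Hermitian n×n complex matrix, V an n×n unitary matrix, and let {ρ_s}_{s∈S} be a finite family of n×n density matrices together with probability weights p_s ≥ 0, Σ_s p_s = 1 (modelling the data distribution). Let U_1,…,U_K be n×n unitary matrices and α_1,…,α_K ≥ 0 with Σ_k α_k = 1. Suppose ‖U_k − V‖ ≤ ε₁ for every k and ‖Σ_k α_k U_k − V‖ ≤ ε₂, for some ε₁, ε₂ ≥ 0. Define the ground-truth values h_s := Re Tr(O · V ρ_s Vᴴ), the density-model predictions f_s := Re Tr(O · Σ_k α_k U_k ρ_s U_kᴴ), and set δ₁ := 2 ε₁ ‖O‖ and δ₂ := 2 ε₂ ‖O‖. Then Σ_s p_s |h_s − f_s| ≤ δ₁²/(4‖O‖) + 2 δ₂. -/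
set_option maxHeartbeats 1000000

open scoped Matrix.Norms.L2Operator ComplexOrder
open Matrix

/-- For a PSD matrix `R`, `|Tr(M R)| ≤ ‖M‖ · Re Tr R`. -/
lemma trace_mul_psd_norm_le {n : ℕ} (M R : Matrix (Fin n) (Fin n) ℂ)
    (hR : R.PosSemidef) : ‖(M * R).trace‖ ≤ ‖M‖ * R.trace.re := by
  classical
  open scoped MatrixOrder in
  obtain ⟨s, hs1, -, hssq⟩ := CFC.exists_sqrt_of_isSelfAdjoint_of_quasispectrumRestricts
    hR.isHermitian (QuasispectrumRestricts.nnreal_of_nonneg hR.nonneg)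
  have hsherm : s.IsHermitian := hs1
  have hconj : ∀ i j, s i j = starRingEnd ℂ (s j i) := by
    intro i j; rw [← hsherm.apply]; rfl
  set c : Fin n → EuclideanSpace ℂ (Fin n) := fun i => WithLp.toLp 2 (fun j => s j i) with hc
  set d : Fin n → EuclideanSpace ℂ (Fin n) := fun i => WithLp.toLp 2 (M.mulVec (fun j => s j i)) with hd
  have hinner : ∀ i, (inner ℂ (c i) (d i) : ℂ) =
      ∑ x, starRingEnd ℂ (s x i) * ∑ j, M x j * s j i := by
    intro i
    simp only [PiLp.inner_apply, RCLike.inner_apply]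
    exact Finset.sum_congr rfl fun x _ => mul_comm _ _
  have hdiag : ∀ i, (s * M * s) i i = inner ℂ (c i) (d i) := by
    intro i
    rw [hinner]
    simp only [Matrix.mul_apply, Finset.sum_mul, Finset.mul_sum]
    rw [Finset.sum_comm]
    exact Finset.sum_congr rfl fun j _ => Finset.sum_congr rfl fun k _ => by
      rw [hconj j i, Complex.conj_conj]; ring
  have htr : (M * R).trace = ∑ i, (inner ℂ (c i) (d i) : ℂ) := by
    rw [← hssq, ← mul_assoc, Matrix.trace_mul_comm, Matrix.trace]
    exact Finset.sum_congr rfl fun i _ => by rw [Matrix.diag_apply, ← mul_assoc]; exact hdiag i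
  have hnorm : ∀ i, ‖(inner ℂ (c i) (d i) : ℂ)‖ ≤ ‖M‖ * ‖c i‖ ^ 2 := by
    intro i
    calc ‖(inner ℂ (c i) (d i) : ℂ)‖ ≤ ‖c i‖ * ‖d i‖ := norm_inner_le_norm _ _
      _ ≤ ‖c i‖ * (‖M‖ * ‖c i‖) := by gcongr; exact M.l2_opNorm_mulVec (c i)
      _ = ‖M‖ * ‖c i‖ ^ 2 := by ring
  have hcnorm : ∀ i, ‖c i‖ ^ 2 = ∑ j, ‖s j i‖ ^ 2 := by
    intro i
    rw [EuclideanSpace.norm_eq, Real.sq_sqrt (by positivity)]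
  have hsumc : ∑ i, ‖c i‖ ^ 2 = R.trace.re := by
    rw [← hssq, Matrix.trace, Complex.re_sum]
    refine Finset.sum_congr rfl fun i _ => ?_
    rw [hcnorm]
    simp only [Matrix.diag_apply, Matrix.mul_apply, Complex.re_sum]
    refine Finset.sum_congr rfl fun j _ => ?_
    rw [hconj i j, Complex.conj_mul', ← Complex.ofReal_pow, Complex.ofReal_re]
  calc ‖(M * R).trace‖ ≤ ∑ i, ‖(inner ℂ (c i) (d i) : ℂ)‖ := by
        rw [htr]; exact norm_sum_le _ _
    _ ≤ ∑ i, ‖M‖ * ‖c i‖ ^ 2 := Finset.sum_le_sum fun i _ => hnorm i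
    _ = ‖M‖ * R.trace.re := by rw [← Finset.mul_sum, hsumc]

lemma unitary_l2_opNorm {n : ℕ} (hn : 0 < n) (W : Matrix (Fin n) (Fin n) ℂ)
    (hW : Wᴴ * W = 1) : ‖W‖ = 1 := by
  haveI : Nonempty (Fin n) := ⟨⟨0, hn⟩⟩
  have h1 : ‖(1 : Matrix (Fin n) (Fin n) ℂ)‖ = 1 := by
    rw [Matrix.cstar_norm_def, _root_.map_one]
    exact ContinuousLinearMap.norm_id
  have h2 : ‖W‖ * ‖W‖ = 1 := by
    rw [← Matrix.l2_opNorm_conjTranspose_mul_self, hW, h1]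
  nlinarith [norm_nonneg (W : Matrix (Fin n) (Fin n) ℂ)]

lemma trace_sandwich_le {n : ℕ} (O A R B : Matrix (Fin n) (Fin n) ℂ)
    (hR : R.PosSemidef) (htr : R.trace.re = 1) :
    ‖(O * (A * R * B)).trace‖ ≤ ‖B‖ * ‖O‖ * ‖A‖ := by
  have h1 : (O * (A * R * B)).trace = ((B * O * A) * R).trace := by
    rw [show O * (A * R * B) = (O * A * R) * B by noncomm_ring,
      Matrix.trace_mul_comm, ← mul_assoc, ← mul_assoc]
  rw [h1]
  calc ‖((B * O * A) * R).trace‖ ≤ ‖B * O * A‖ * R.trace.re :=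
        trace_mul_psd_norm_le _ _ hR
    _ = ‖B * O * A‖ := by rw [htr, mul_one]
    _ ≤ ‖B‖ * ‖O‖ * ‖A‖ := by
        calc ‖B * O * A‖ ≤ ‖B * O‖ * ‖A‖ := Matrix.l2_opNorm_mul _ _
          _ ≤ ‖B‖ * ‖O‖ * ‖A‖ := by gcongr; exact Matrix.l2_opNorm_mul _ _

/-- **Mixing lemma for supervised learning** (Lemma 1 of the paper).
If each sub-unitary `U k` is `ε₁`-close to the target unitary `V` in L2 operator norm,
and the linear combination `∑ k, α k • U k` is `ε₂`-close to `V`, then the expected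
prediction error of the density QNN over the data distribution is at most
`δ₁² / (4‖O‖) + 2δ₂` where `δᵢ = 2 εᵢ ‖O‖`. -/
theorem mixing_lemma_supervised_learning {n K : ℕ} {S : Type*} [Fintype S]
    (O V : Matrix (Fin n) (Fin n) ℂ)
    (hO : O.IsHermitian) (hOne : O ≠ 0)
    (hV : Vᴴ * V = 1)
    (ρ : S → Matrix (Fin n) (Fin n) ℂ)
    (hρ : ∀ s, (ρ s).PosSemidef ∧ (ρ s).trace = 1)
    (p : S → ℝ) (hp : ∀ s, 0 ≤ p s) (hpsum : ∑ s, p s = 1)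
    (U : Fin K → Matrix (Fin n) (Fin n) ℂ)
    (hU : ∀ k, (U k)ᴴ * U k = 1)
    (α : Fin K → ℝ) (hα : ∀ k, 0 ≤ α k) (hαsum : ∑ k, α k = 1)
    (ε₁ ε₂ : ℝ) (hε₁ : 0 ≤ ε₁) (hε₂ : 0 ≤ ε₂)
    (hclose : ∀ k, ‖U k - V‖ ≤ ε₁)
    (hlcu : ‖(∑ k, (α k : ℂ) • U k) - V‖ ≤ ε₂)
    (h f : S → ℝ)
    (hh : ∀ s, h s = ((O * (V * ρ s * Vᴴ)).trace).re)
    (hf : ∀ s, f s = ((O * ∑ k, (α k : ℂ) • (U k * ρ s * (U k)ᴴ)).trace).re)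
    (δ₁ δ₂ : ℝ) (hδ₁ : δ₁ = 2 * ε₁ * ‖O‖) (hδ₂ : δ₂ = 2 * ε₂ * ‖O‖) :
    ∑ s, p s * |h s - f s| ≤ δ₁ ^ 2 / (4 * ‖O‖) + 2 * δ₂ := by
  rcases Nat.eq_zero_or_pos n with hn | hn
  · subst hn
    exact absurd (by ext i j; exact i.elim0) hOne
  have hOpos : 0 < ‖O‖ := by
    rw [norm_pos_iff]; exact hOne
  have hVn : ‖V‖ = 1 := unitary_l2_opNorm hn V hV
  have hVHn : ‖Vᴴ‖ = 1 := by rw [Matrix.l2_opNorm_conjTranspose, hVn]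
  set G : Matrix (Fin n) (Fin n) ℂ := (∑ k, (α k : ℂ) • U k) - V with hG
  have hGn : ‖G‖ ≤ ε₂ := hlcu
  have hGHn : ‖Gᴴ‖ ≤ ε₂ := by rw [Matrix.l2_opNorm_conjTranspose]; exact hGn
  set E : Fin K → Matrix (Fin n) (Fin n) ℂ := fun k => U k - V with hE
  have hEn : ∀ k, ‖E k‖ ≤ ε₁ := hclose
  have hEHn : ∀ k, ‖(E k)ᴴ‖ ≤ ε₁ := fun k => by
    rw [Matrix.l2_opNorm_conjTranspose]; exact hEn k
  have hαsumC : (∑ k, (α k : ℂ)) = 1 := by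
    rw [← Complex.ofReal_sum, hαsum, Complex.ofReal_one]
  have hsumE : ∑ k, (α k : ℂ) • E k = G := by
    simp only [hE, smul_sub]
    rw [Finset.sum_sub_distrib, ← Finset.sum_smul, hαsumC, one_smul, hG]
  -- pointwise bound
  have key : ∀ s, |h s - f s| ≤ ε₁ ^ 2 * ‖O‖ + 2 * (ε₂ * ‖O‖) := by
    intro s
    set R := ρ s with hR
    have hRpsd : R.PosSemidef := (hρ s).1
    have hRtr : R.trace.re = 1 := by rw [(hρ s).2, Complex.one_re]
    -- decomposition
    have expand : ∀ k, U k * R * (U k)ᴴ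
        = V * R * Vᴴ + (E k * R * Vᴴ + V * R * (E k)ᴴ + E k * R * (E k)ᴴ) := by
      intro k
      simp only [hE, conjTranspose_sub]
      noncomm_ring
    have hterm2 : ∑ k, (α k : ℂ) • (E k * R * Vᴴ) = G * R * Vᴴ := by
      rw [← hsumE]
      rw [Finset.sum_mul, Finset.sum_mul]
      exact Finset.sum_congr rfl fun k _ => by
        rw [Matrix.smul_mul, Matrix.smul_mul]
    have hterm3 : ∑ k, (α k : ℂ) • (V * R * (E k)ᴴ) = V * R * Gᴴ := by
      rw [← hsumE, conjTranspose_sum, Finset.mul_sum]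
      refine Finset.sum_congr rfl fun k _ => ?_
      rw [conjTranspose_smul, Matrix.mul_smul]
      congr 1
      simp [Complex.star_def, Complex.conj_ofReal]
    have hterm1 : ∑ k, (α k : ℂ) • (V * R * Vᴴ) = V * R * Vᴴ := by
      rw [← Finset.sum_smul, hαsumC, one_smul]
    have hdecomp : (∑ k, (α k : ℂ) • (U k * R * (U k)ᴴ))
        = V * R * Vᴴ + (G * R * Vᴴ + (V * R * Gᴴ
          + ∑ k, (α k : ℂ) • (E k * R * (E k)ᴴ))) := by
      calc ∑ k, (α k : ℂ) • (U k * R * (U k)ᴴ)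
          = ∑ k, ((α k : ℂ) • (V * R * Vᴴ) + ((α k : ℂ) • (E k * R * Vᴴ)
              + ((α k : ℂ) • (V * R * (E k)ᴴ) + (α k : ℂ) • (E k * R * (E k)ᴴ)))) := by
            refine Finset.sum_congr rfl fun k _ => ?_
            rw [expand k]
            simp only [smul_add]
            abel
        _ = _ := by
            rw [Finset.sum_add_distrib, Finset.sum_add_distrib, Finset.sum_add_distrib,
              hterm1, hterm2, hterm3]
    set t1 : ℝ := ((O * (G * R * Vᴴ)).trace).re with ht1def
    set t2 : ℝ := ((O * (V * R * Gᴴ)).trace).re with ht2def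
    set t3 : ℝ := ((O * ∑ k, (α k : ℂ) • (E k * R * (E k)ᴴ)).trace).re with ht3def
    have hfs : f s = h s + (t1 + t2 + t3) := by
      rw [hf, hh, hdecomp, ht1def, ht2def, ht3def]
      simp only [mul_add, Matrix.trace_add, Complex.add_re, hR]
      ring
    have hb1 : |t1| ≤ ‖O‖ * ε₂ := by
      rw [ht1def]
      calc |((O * (G * R * Vᴴ)).trace).re| ≤ ‖(O * (G * R * Vᴴ)).trace‖ :=
            Complex.abs_re_le_norm _
        _ ≤ ‖Vᴴ‖ * ‖O‖ * ‖G‖ := trace_sandwich_le O G R Vᴴ hRpsd hRtr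
        _ ≤ 1 * ‖O‖ * ε₂ := by
            have hv : ‖Vᴴ‖ ≤ 1 := hVHn.le
            gcongr
        _ = ‖O‖ * ε₂ := by ring
    have hb2 : |t2| ≤ ε₂ * ‖O‖ := by
      rw [ht2def]
      calc |((O * (V * R * Gᴴ)).trace).re| ≤ ‖(O * (V * R * Gᴴ)).trace‖ :=
            Complex.abs_re_le_norm _
        _ ≤ ‖Gᴴ‖ * ‖O‖ * ‖V‖ := trace_sandwich_le O V R Gᴴ hRpsd hRtr
        _ ≤ ε₂ * ‖O‖ * 1 := by
            have hv : ‖V‖ ≤ 1 := hVn.le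
            gcongr
        _ = ε₂ * ‖O‖ := by ring
    have hb3 : |t3| ≤ ε₁ ^ 2 * ‖O‖ := by
      rw [ht3def]
      have htr3 : (O * ∑ k, (α k : ℂ) • (E k * R * (E k)ᴴ)).trace
          = ∑ k, (α k : ℂ) • (O * (E k * R * (E k)ᴴ)).trace := by
        rw [Finset.mul_sum, Matrix.trace_sum]
        exact Finset.sum_congr rfl fun k _ => by rw [mul_smul_comm, Matrix.trace_smul]
      calc |((O * ∑ k, (α k : ℂ) • (E k * R * (E k)ᴴ)).trace).re|
          ≤ ‖(O * ∑ k, (α k : ℂ) • (E k * R * (E k)ᴴ)).trace‖ := Complex.abs_re_le_norm _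
        _ ≤ ∑ k, ‖(α k : ℂ) • (O * (E k * R * (E k)ᴴ)).trace‖ := by
            rw [htr3]; exact norm_sum_le _ _
        _ ≤ ∑ k, α k * (ε₁ * ‖O‖ * ε₁) := by
            refine Finset.sum_le_sum fun k _ => ?_
            rw [norm_smul, Complex.norm_real, Real.norm_eq_abs, abs_of_nonneg (hα k)]
            refine mul_le_mul_of_nonneg_left ?_ (hα k)
            calc ‖(O * (E k * R * (E k)ᴴ)).trace‖ ≤ ‖(E k)ᴴ‖ * ‖O‖ * ‖E k‖ :=
                  trace_sandwich_le O (E k) R ((E k)ᴴ) hRpsd hRtr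
              _ ≤ ε₁ * ‖O‖ * ε₁ := by
                  have h1 := hEHn k
                  have h2 := hEn k
                  gcongr
        _ = ε₁ ^ 2 * ‖O‖ := by rw [← Finset.sum_mul, hαsum]; ring
    have hdiff : h s - f s = -(t1 + t2 + t3) := by rw [hfs]; ring
    rw [hdiff, abs_neg]
    calc |t1 + t2 + t3| ≤ |t1| + |t2| + |t3| := abs_add_three _ _ _
      _ ≤ ‖O‖ * ε₂ + ε₂ * ‖O‖ + ε₁ ^ 2 * ‖O‖ := add_le_add (add_le_add hb1 hb2) hb3
      _ = ε₁ ^ 2 * ‖O‖ + 2 * (ε₂ * ‖O‖) := by ring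
  calc ∑ s, p s * |h s - f s|
      ≤ ∑ s, p s * (ε₁ ^ 2 * ‖O‖ + 2 * (ε₂ * ‖O‖)) :=
        Finset.sum_le_sum fun s _ => mul_le_mul_of_nonneg_left (key s) (hp s)
    _ = ε₁ ^ 2 * ‖O‖ + 2 * (ε₂ * ‖O‖) := by
        rw [← Finset.sum_mul, hpsum, one_mul]
    _ ≤ δ₁ ^ 2 / (4 * ‖O‖) + 2 * δ₂ := by
        rw [hδ₁, hδ₂]
        have h1 : (2 * ε₁ * ‖O‖) ^ 2 / (4 * ‖O‖) = ε₁ ^ 2 * ‖O‖ := by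
          field_simp
          ring
        rw [h1]
        nlinarith [mul_nonneg hε₂ hOpos.le]
end

section
/- Let O be a Hermitian n×n complex matrix, V an n×n unitary matrix, U_1,…,U_K n×n unitary matrices, and α_1,…,α_K ≥ 0 with Σ_k α_k = 1. Suppose ‖U_k − V‖ ≤ ε₁ for every k and ‖Σ_k α_k U_k − V‖ ≤ ε₂, for some ε₁, ε₂ ≥ 0. Then for every n×n density matrix ρ, |Tr(O · (Σ_k α_k U_k ρ U_kᴴ − V ρ Vᴴ))| ≤ ‖O‖ (ε₁² + 2 ε₂). -/
open scoped Matrix.Norms.L2Operator ComplexOrder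
open Matrix


lemma exists_eq_conjTranspose_mul_self' {n : ℕ} (ρ : Matrix (Fin n) (Fin n) ℂ)
    (hρ : ρ.PosSemidef) : ∃ B : Matrix (Fin n) (Fin n) ℂ, ρ = Bᴴ * B := by
  open scoped MatrixOrder in
  have h0 : 0 ≤ ρ := nonneg_iff_posSemidef.mpr hρ
  open scoped MatrixOrder in
  have hs := CFC.sqrt_mul_sqrt_self ρ h0
  open scoped MatrixOrder in
  have hsa : IsSelfAdjoint (CFC.sqrt ρ) := (CFC.sqrt_nonneg ρ).isSelfAdjoint
  refine ⟨CFC.sqrt ρ, ?_⟩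
  have hsa' : (CFC.sqrt ρ)ᴴ = CFC.sqrt ρ := hsa
  rw [hsa']
  exact hs.symm

lemma abs_trace_mul_posSemidef_le {n : ℕ} (M ρ : Matrix (Fin n) (Fin n) ℂ)
    (hρ : ρ.PosSemidef) :
    ‖(M * ρ).trace‖ ≤ ‖M‖ * (ρ.trace).re := by
  obtain ⟨B, rfl⟩ := exists_eq_conjTranspose_mul_self' ρ hρ
  set px : Fin n → Fin n → ℂ := fun i j => star (B i j) with hpx
  set x : Fin n → EuclideanSpace ℂ (Fin n) :=
    fun i => (WithLp.equiv 2 (Fin n → ℂ)).symm (px i) with hx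
  have hxnorm : ∀ i, ‖x i‖ ^ 2 = ∑ j, ‖B i j‖ ^ 2 := by
    intro i
    rw [EuclideanSpace.norm_eq, Real.sq_sqrt (by positivity)]
    simp [hx, hpx]
  have htr : ((Bᴴ * B).trace).re = ∑ i, ‖x i‖ ^ 2 := by
    simp only [hxnorm]
    have hw : ∀ w : ℂ, (star w * w).re = ‖w‖ ^ 2 := by
      intro w
      rw [Complex.star_def, mul_comm, Complex.mul_conj]
      simp [Complex.normSq_eq_norm_sq]
      norm_cast
    rw [Matrix.trace]
    simp only [Matrix.diag, Matrix.mul_apply, Matrix.conjTranspose_apply, Complex.re_sum, hw]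
    exact Finset.sum_comm
  have htrace_eq : (M * (Bᴴ * B)).trace = (B * M * Bᴴ).trace := by
    rw [← Matrix.mul_assoc, Matrix.trace_mul_comm, Matrix.mul_assoc]
  have hdiag : ∀ i, (B * M * Bᴴ) i i =
      @inner ℂ _ _ (x i) ((WithLp.equiv 2 (Fin n → ℂ)).symm (M *ᵥ px i)) := by
    intro i
    simp only [PiLp.inner_apply, RCLike.inner_apply]
    simp only [hx, hpx, Matrix.mul_apply, Matrix.conjTranspose_apply, Matrix.mulVec,
      dotProduct, WithLp.equiv_symm_apply, PiLp.toLp_apply, starRingEnd_apply, star_star]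
    simp only [Finset.sum_mul, Finset.mul_sum]
    rw [Finset.sum_comm]
    exact Finset.sum_congr rfl fun j _ => Finset.sum_congr rfl fun k _ => by ring
  have hbound : ∀ i, ‖(B * M * Bᴴ) i i‖ ≤ ‖M‖ * ‖x i‖ ^ 2 := by
    intro i
    rw [hdiag i]
    calc ‖@inner ℂ _ _ (x i) ((WithLp.equiv 2 (Fin n → ℂ)).symm (M *ᵥ px i))‖
        ≤ ‖x i‖ * ‖(WithLp.equiv 2 (Fin n → ℂ)).symm (M *ᵥ px i)‖ := norm_inner_le_norm _ _
      _ ≤ ‖x i‖ * (‖M‖ * ‖x i‖) := by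
          gcongr
          exact M.l2_opNorm_mulVec (x i)
      _ = ‖M‖ * ‖x i‖ ^ 2 := by ring
  calc ‖(M * (Bᴴ * B)).trace‖ = ‖∑ i, (B * M * Bᴴ) i i‖ := by
        rw [htrace_eq]; rfl
    _ ≤ ∑ i, ‖(B * M * Bᴴ) i i‖ := by
        exact norm_sum_le _ _
    _ ≤ ∑ i, ‖M‖ * ‖x i‖ ^ 2 := Finset.sum_le_sum fun i _ => hbound i
    _ = ‖M‖ * ((Bᴴ * B).trace).re := by rw [htr, Finset.mul_sum]

/-- **Hastings–Campbell Mixing lemma**, prediction-error form: if each unitary `U k` is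
`ε₁`-close to the target unitary `V` and the convex combination `∑ k, α k • U k` is
`ε₂`-close to `V` (L2 operator norm), then the mixed-unitary channel's expectation value
of a Hermitian observable `O` on any density matrix `ρ` deviates from the target by at
most `‖O‖ (ε₁² + 2 ε₂)`. -/
theorem mixing_lemma_prediction_error {n K : ℕ}
    (O V : Matrix (Fin n) (Fin n) ℂ) (hO : O.IsHermitian) (hV : Vᴴ * V = 1)
    (U : Fin K → Matrix (Fin n) (Fin n) ℂ) (hU : ∀ k, (U k)ᴴ * U k = 1)
    (α : Fin K → ℝ) (hα : ∀ k, 0 ≤ α k) (hαsum : ∑ k, α k = 1)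
    (ε₁ ε₂ : ℝ) (hε₁ : 0 ≤ ε₁) (hε₂ : 0 ≤ ε₂)
    (hclose : ∀ k, ‖U k - V‖ ≤ ε₁)
    (hlcu : ‖(∑ k, (α k : ℂ) • U k) - V‖ ≤ ε₂)
    (ρ : Matrix (Fin n) (Fin n) ℂ) (hρ : ρ.PosSemidef ∧ ρ.trace = 1) :
    ‖(O * ((∑ k, (α k : ℂ) • (U k * ρ * (U k)ᴴ)) - V * ρ * Vᴴ)).trace‖ ≤
      ‖O‖ * (ε₁ ^ 2 + 2 * ε₂) := by
  obtain ⟨hρ1, hρ2⟩ := hρ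
  have hρre : (ρ.trace).re = 1 := by rw [hρ2, Complex.one_re]
  -- the key scalar bound
  have key : ∀ M : Matrix (Fin n) (Fin n) ℂ, ‖(M * ρ).trace‖ ≤ ‖M‖ := fun M => by
    have := abs_trace_mul_posSemidef_le M ρ hρ1
    rwa [hρre, mul_one] at this
  have hOn : (0:ℝ) ≤ ‖O‖ := norm_nonneg O
  -- norm of V is at most 1
  have hone : ‖(1 : Matrix (Fin n) (Fin n) ℂ)‖ ≤ 1 := by
    have h1 : ‖(1 : Matrix (Fin n) (Fin n) ℂ)ᴴ * 1‖ =
        ‖(1 : Matrix (Fin n) (Fin n) ℂ)‖ * ‖(1 : Matrix (Fin n) (Fin n) ℂ)‖ :=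
      Matrix.l2_opNorm_conjTranspose_mul_self 1
    rw [Matrix.conjTranspose_one, mul_one] at h1
    nlinarith [norm_nonneg (1 : Matrix (Fin n) (Fin n) ℂ)]
  have hVnorm : ‖V‖ ≤ 1 := by
    have h1 : ‖Vᴴ * V‖ = ‖V‖ * ‖V‖ := Matrix.l2_opNorm_conjTranspose_mul_self V
    rw [hV] at h1
    nlinarith [norm_nonneg V]
  have hVHnorm : ‖Vᴴ‖ ≤ 1 := by rwa [Matrix.l2_opNorm_conjTranspose]
  -- decomposition
  set D : Fin K → Matrix (Fin n) (Fin n) ℂ := fun k => U k - V with hD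
  set Δ : Matrix (Fin n) (Fin n) ℂ := ∑ k, (α k : ℂ) • D k with hΔ
  have hsumα : (∑ k, (α k : ℂ)) = 1 := by
    rw [← Complex.ofReal_sum, hαsum, Complex.ofReal_one]
  have hΔeq : Δ = (∑ k, (α k : ℂ) • U k) - V := by
    rw [hΔ]
    simp only [hD, smul_sub]
    rw [Finset.sum_sub_distrib, ← Finset.sum_smul, hsumα, one_smul]
  have hΔnorm : ‖Δ‖ ≤ ε₂ := by rw [hΔeq]; exact hlcu
  have hDnorm : ∀ k, ‖D k‖ ≤ ε₁ := fun k => hclose k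
  have hdecomp : (∑ k, (α k : ℂ) • (U k * ρ * (U k)ᴴ)) - V * ρ * Vᴴ =
      (∑ k, (α k : ℂ) • (D k * ρ * (D k)ᴴ)) + Δ * ρ * Vᴴ + V * ρ * Δᴴ := by
    have hterm : ∀ k, U k * ρ * (U k)ᴴ =
        D k * ρ * (D k)ᴴ + D k * ρ * Vᴴ + V * ρ * (D k)ᴴ + V * ρ * Vᴴ := by
      intro k
      simp only [hD, Matrix.conjTranspose_sub, Matrix.sub_mul, Matrix.mul_sub]
      noncomm_ring
    have h1 : Δ * ρ * Vᴴ = ∑ k, (α k : ℂ) • (D k * ρ * Vᴴ) := by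
      rw [hΔ, Finset.sum_mul, Finset.sum_mul]
      exact Finset.sum_congr rfl fun k _ => by rw [Matrix.smul_mul, Matrix.smul_mul]
    have h2 : V * ρ * Δᴴ = ∑ k, (α k : ℂ) • (V * ρ * (D k)ᴴ) := by
      rw [hΔ, Matrix.conjTranspose_sum, Finset.mul_sum]
      refine Finset.sum_congr rfl fun k _ => ?_
      rw [Matrix.conjTranspose_smul, Matrix.mul_smul, Complex.star_def, Complex.conj_ofReal]
    have h3 : (∑ k, (α k : ℂ) • (V * ρ * Vᴴ)) = V * ρ * Vᴴ := by
      rw [← Finset.sum_smul, hsumα, one_smul]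
    calc (∑ k, (α k : ℂ) • (U k * ρ * (U k)ᴴ)) - V * ρ * Vᴴ
        = (∑ k, ((α k : ℂ) • (D k * ρ * (D k)ᴴ) + (α k : ℂ) • (D k * ρ * Vᴴ) +
            (α k : ℂ) • (V * ρ * (D k)ᴴ) + (α k : ℂ) • (V * ρ * Vᴴ))) - V * ρ * Vᴴ := by
          congr 1
          exact Finset.sum_congr rfl fun k _ => by rw [hterm k]; simp only [smul_add]
      _ = (∑ k, (α k : ℂ) • (D k * ρ * (D k)ᴴ)) + Δ * ρ * Vᴴ + V * ρ * Δᴴ := by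
          simp only [Finset.sum_add_distrib, h3, h1, h2]
          abel
  have cyc : ∀ A B : Matrix (Fin n) (Fin n) ℂ, (O * (A * ρ * B)).trace = (B * O * A * ρ).trace := by
    intro A B
    rw [← Matrix.mul_assoc, Matrix.trace_mul_comm, ← Matrix.mul_assoc, ← Matrix.mul_assoc]
  rw [hdecomp]
  -- split the trace
  have htrace_split : (O * ((∑ k, (α k : ℂ) • (D k * ρ * (D k)ᴴ)) + Δ * ρ * Vᴴ + V * ρ * Δᴴ)).trace
      = (∑ k, (α k : ℂ) * ((D k)ᴴ * O * D k * ρ).trace)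
        + (Vᴴ * O * Δ * ρ).trace + (Δᴴ * O * V * ρ).trace := by
    rw [Matrix.mul_add, Matrix.mul_add, Matrix.trace_add, Matrix.trace_add]
    congr 1
    congr 1
    · rw [Finset.mul_sum, Matrix.trace_sum]
      refine Finset.sum_congr rfl fun k _ => ?_
      rw [Matrix.mul_smul, Matrix.trace_smul, smul_eq_mul, cyc]
    · rw [← cyc]
    · rw [← cyc]
  rw [htrace_split]
  have b1 : ∀ k, ‖((D k)ᴴ * O * D k * ρ).trace‖ ≤ ‖O‖ * ε₁ ^ 2 := by
    intro k
    refine (key _).trans ?_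
    calc ‖(D k)ᴴ * O * D k‖ ≤ ‖(D k)ᴴ * O‖ * ‖D k‖ := Matrix.l2_opNorm_mul _ _
      _ ≤ (‖(D k)ᴴ‖ * ‖O‖) * ‖D k‖ :=
          mul_le_mul_of_nonneg_right (Matrix.l2_opNorm_mul _ _) (norm_nonneg _)
      _ = ‖D k‖ * ‖O‖ * ‖D k‖ := by rw [Matrix.l2_opNorm_conjTranspose]
      _ ≤ ε₁ * ‖O‖ * ε₁ :=
          mul_le_mul (mul_le_mul_of_nonneg_right (hDnorm k) hOn) (hDnorm k)
            (norm_nonneg _) (mul_nonneg hε₁ hOn)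
      _ = ‖O‖ * ε₁ ^ 2 := by ring
  have b2 : ‖(Vᴴ * O * Δ * ρ).trace‖ ≤ ‖O‖ * ε₂ := by
    refine (key _).trans ?_
    calc ‖Vᴴ * O * Δ‖ ≤ ‖Vᴴ * O‖ * ‖Δ‖ := Matrix.l2_opNorm_mul _ _
      _ ≤ (‖Vᴴ‖ * ‖O‖) * ‖Δ‖ :=
          mul_le_mul_of_nonneg_right (Matrix.l2_opNorm_mul _ _) (norm_nonneg _)
      _ ≤ (1 * ‖O‖) * ε₂ :=
          mul_le_mul (mul_le_mul_of_nonneg_right hVHnorm hOn) hΔnorm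
            (norm_nonneg _) (by linarith)
      _ = ‖O‖ * ε₂ := by ring
  have b3 : ‖(Δᴴ * O * V * ρ).trace‖ ≤ ‖O‖ * ε₂ := by
    refine (key _).trans ?_
    calc ‖Δᴴ * O * V‖ ≤ ‖Δᴴ * O‖ * ‖V‖ := Matrix.l2_opNorm_mul _ _
      _ ≤ (‖Δᴴ‖ * ‖O‖) * ‖V‖ :=
          mul_le_mul_of_nonneg_right (Matrix.l2_opNorm_mul _ _) (norm_nonneg _)
      _ = ‖Δ‖ * ‖O‖ * ‖V‖ := by rw [Matrix.l2_opNorm_conjTranspose]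
      _ ≤ ε₂ * ‖O‖ * 1 :=
          mul_le_mul (mul_le_mul_of_nonneg_right hΔnorm hOn) hVnorm
            (norm_nonneg _) (mul_nonneg hε₂ hOn)
      _ = ‖O‖ * ε₂ := by ring
  have bsum : ‖∑ k, (α k : ℂ) * ((D k)ᴴ * O * D k * ρ).trace‖ ≤ ‖O‖ * ε₁ ^ 2 := by
    calc ‖∑ k, (α k : ℂ) * ((D k)ᴴ * O * D k * ρ).trace‖
        ≤ ∑ k, ‖(α k : ℂ) * ((D k)ᴴ * O * D k * ρ).trace‖ := by
          exact norm_sum_le _ _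
      _ ≤ ∑ k, α k * (‖O‖ * ε₁ ^ 2) := by
          refine Finset.sum_le_sum fun k _ => ?_
          rw [norm_mul, Complex.norm_real, Real.norm_eq_abs, abs_of_nonneg (hα k)]
          exact mul_le_mul_of_nonneg_left (b1 k) (hα k)
      _ = (∑ k, α k) * (‖O‖ * ε₁ ^ 2) := by rw [Finset.sum_mul]
      _ = ‖O‖ * ε₁ ^ 2 := by rw [hαsum, one_mul]
  calc ‖(∑ k, (α k : ℂ) * ((D k)ᴴ * O * D k * ρ).trace)
          + (Vᴴ * O * Δ * ρ).trace + (Δᴴ * O * V * ρ).trace‖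
      ≤ ‖(∑ k, (α k : ℂ) * ((D k)ᴴ * O * D k * ρ).trace)
          + (Vᴴ * O * Δ * ρ).trace‖ + ‖(Δᴴ * O * V * ρ).trace‖ :=
        norm_add_le _ _
    _ ≤ (‖∑ k, (α k : ℂ) * ((D k)ᴴ * O * D k * ρ).trace‖
          + ‖(Vᴴ * O * Δ * ρ).trace‖) + ‖(Δᴴ * O * V * ρ).trace‖ :=
        add_le_add_left (norm_add_le _ _) _
    _ ≤ (‖O‖ * ε₁ ^ 2 + ‖O‖ * ε₂) + ‖O‖ * ε₂ := add_le_add (add_le_add bsum b2) b3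
    _ = ‖O‖ * (ε₁ ^ 2 + 2 * ε₂) := by ring
end

section
/- Let Q be a Hermitian n×n complex matrix with Q³ = Q, let B be an arbitrary n×n complex matrix, and let θ ∈ ℝ. Then exp(iθQ) B exp(−iθQ) − exp(−iθQ) B exp(iθQ) = −2i (sin θ) (BQ − QB) − 2i (sin θ)(cos θ − 1) (Q(QBQ) − (QBQ)Q). -/
open Matrix
open scoped Nat

lemma tripotent_pow_odd {n : ℕ} (Q : Matrix (Fin n) (Fin n) ℂ) (hQ3 : Q ^ 3 = Q) (k : ℕ) :
    Q ^ (2 * k + 1) = Q := by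
  induction k with
  | zero => simp
  | succ k ih =>
    have h : 2 * (k + 1) + 1 = (2 * k + 1) + 2 := by ring
    rw [h, pow_add, ih, show Q * Q ^ 2 = Q ^ 3 from (pow_succ' Q 2).symm, hQ3]

lemma tripotent_pow_even {n : ℕ} (Q : Matrix (Fin n) (Fin n) ℂ) (hQ3 : Q ^ 3 = Q) (k : ℕ) :
    Q ^ (2 * k + 2) = Q ^ 2 := by
  have : 2 * k + 2 = (2 * k + 1) + 1 := by ring
  rw [this, pow_succ, tripotent_pow_odd Q hQ3, sq]

lemma exp_smul_tripotent {n : ℕ} (Q : Matrix (Fin n) (Fin n) ℂ) (hQ3 : Q ^ 3 = Q) (z : ℂ) :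
    NormedSpace.exp (z • Q) =
      1 + Complex.sinh z • Q + (Complex.cosh z - 1) • Q ^ 2 := by
  have h1 : HasSum (fun k : ℕ => (z ^ (2 * k + 1) / ((2 * k + 1)! : ℂ)) • Q)
      (Complex.sinh z • Q) := (Complex.hasSum_sinh z).smul_const Q
  have h2s : HasSum (fun k : ℕ => z ^ (2 * (k + 1)) / ((2 * (k + 1))! : ℂ))
      (Complex.cosh z - 1) := by
    have := (hasSum_nat_add_iff' (f := fun m : ℕ => z ^ (2 * m) / ((2 * m)! : ℂ)) 1).mpr
      (Complex.hasSum_cosh z)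
    simpa using this
  have h2 : HasSum (fun k : ℕ => (z ^ (2 * (k + 1)) / ((2 * (k + 1))! : ℂ)) • Q ^ 2)
      ((Complex.cosh z - 1) • Q ^ 2) := h2s.smul_const _
  have hshift : HasSum (fun m : ℕ => (z ^ (m + 1) / ((m + 1)! : ℂ)) • Q ^ (m + 1))
      (Complex.sinh z • Q + (Complex.cosh z - 1) • Q ^ 2) := by
    refine HasSum.even_add_odd ?_ ?_
    · convert h1 using 2 with k
      rw [tripotent_pow_odd Q hQ3]
    · have he : ∀ k : ℕ, (z ^ (2 * k + 1 + 1) / ((2 * k + 1 + 1)! : ℂ)) • Q ^ (2 * k + 1 + 1)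
          = (z ^ (2 * (k + 1)) / ((2 * (k + 1))! : ℂ)) • Q ^ 2 := by
        intro k
        have ha : 2 * k + 1 + 1 = 2 * (k + 1) := by ring
        have hb : 2 * (k + 1) = 2 * k + 2 := by ring
        rw [ha, hb, tripotent_pow_even Q hQ3, ← hb]
      simpa only [he] using h2
  have key : HasSum (fun m : ℕ => ((m ! : ℂ))⁻¹ • (z • Q) ^ m)
      (Complex.sinh z • Q + (Complex.cosh z - 1) • Q ^ 2 + 1) := by
    have := (hasSum_nat_add_iff (f := fun m : ℕ => (z ^ m / ((m)! : ℂ)) • Q ^ m) 1).mp hshift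
    simp only [Finset.range_one, Finset.sum_singleton, pow_zero, Nat.factorial_zero,
      Nat.cast_one, div_one, one_smul] at this
    convert this using 2 with m
    · rfl
    rw [smul_pow, smul_smul, div_eq_inv_mul]
  simp only [NormedSpace.exp_eq_tsum ℂ]
  rw [key.tsum_eq]
  abel

/-- Antisymmetrized Heisenberg conjugation identity for a Hermitian tripotent
generator `Q` (`Qᴴ = Q`, `Q³ = Q`):
`e^{iθQ} B e^{−iθQ} − e^{−iθQ} B e^{iθQ}
  = −2i sin θ [B,Q] − 2i sin θ (cos θ − 1) [Q, QBQ]`. -/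
theorem conj_exp_antisymmetrized_tripotent {n : ℕ}
    (Q B : Matrix (Fin n) (Fin n) ℂ) (hQherm : Qᴴ = Q) (hQ3 : Q ^ 3 = Q) (θ : ℝ) :
    NormedSpace.exp ((Complex.I * (θ : ℂ)) • Q) * B *
        NormedSpace.exp ((-(Complex.I * (θ : ℂ))) • Q) -
      NormedSpace.exp ((-(Complex.I * (θ : ℂ))) • Q) * B *
        NormedSpace.exp ((Complex.I * (θ : ℂ)) • Q) =
    (-(2 * Complex.I * (Real.sin θ : ℂ))) • (B * Q - Q * B) -
      (2 * Complex.I * (Real.sin θ : ℂ) * ((Real.cos θ : ℂ) - 1)) •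
        (Q * (Q * B * Q) - (Q * B * Q) * Q) := by
  have hs : Complex.sinh (Complex.I * (θ : ℂ)) = Complex.I * (Real.sin θ : ℂ) := by
    rw [mul_comm, Complex.sinh_mul_I, Complex.ofReal_sin]; ring
  have hc : Complex.cosh (Complex.I * (θ : ℂ)) = (Real.cos θ : ℂ) := by
    rw [mul_comm, Complex.cosh_mul_I, Complex.ofReal_cos]
  have hsn : Complex.sinh (-(Complex.I * (θ : ℂ))) = -(Complex.I * (Real.sin θ : ℂ)) := by
    rw [Complex.sinh_neg, hs]
  have hcn : Complex.cosh (-(Complex.I * (θ : ℂ))) = (Real.cos θ : ℂ) := by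
    rw [Complex.cosh_neg, hc]
  rw [exp_smul_tripotent Q hQ3, exp_smul_tripotent Q hQ3, hs, hc, hsn, hcn]
  simp only [mul_add, add_mul, mul_sub, sub_mul, smul_mul_assoc, mul_smul_comm, smul_smul,
    one_mul, mul_one, smul_sub, smul_add, pow_two, mul_assoc]
  module
end

section
/- Let X, Y denote the Pauli matrices X = !![0,1;1,0] and Y = !![0,−i;i,0]. Then for every θ ∈ ℝ, the 4×4 matrix exp(−i(θ/2)(Y⊗X − X⊗Y)), in the Kronecker-product basis ordered |00⟩, |01⟩, |10⟩, |11⟩, equals the matrix with rows [1,0,0,0], [0, cos θ, −sin θ, 0], [0, sin θ, cos θ, 0], [0,0,0,1]. -/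
open Matrix
open scoped Kronecker

/-- The Pauli matrix `X`. -/
def PauliX : Matrix (Fin 2) (Fin 2) ℂ := !![0, 1; 1, 0]

/-- The Pauli matrix `Y`. -/
def PauliY : Matrix (Fin 2) (Fin 2) ℂ := !![0, -Complex.I; Complex.I, 0]

namespace RBSAux

noncomputable section
open Complex

abbrev eee : Fin 2 × Fin 2 ≃ Fin 4 := finProdFinEquiv.trans (finCongr (by norm_num))

lemma reindex_entries (M : Matrix (Fin 2 × Fin 2) (Fin 2 × Fin 2) ℂ) :
    Matrix.reindex eee eee M =
    !![M (0,0) (0,0), M (0,0) (0,1), M (0,0) (1,0), M (0,0) (1,1);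
       M (0,1) (0,0), M (0,1) (0,1), M (0,1) (1,0), M (0,1) (1,1);
       M (1,0) (0,0), M (1,0) (0,1), M (1,0) (1,0), M (1,0) (1,1);
       M (1,1) (0,0), M (1,1) (0,1), M (1,1) (1,0), M (1,1) (1,1)] := by
  ext i j
  fin_cases i <;> fin_cases j <;> rfl

def U4 : Matrix (Fin 4) (Fin 4) ℂ := !![1,0,0,0; 0,1,1,0; 0,-I,I,0; 0,0,0,1]
def V4 : Matrix (Fin 4) (Fin 4) ℂ := !![1,0,0,0; 0,1/2,I/2,0; 0,1/2,-I/2,0; 0,0,0,1]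

def dvec (θ : ℝ) : Fin 4 → ℂ := ![0, (θ:ℂ)*I, (-θ:ℂ)*I, 0]

def Up : Matrix (Fin 2 × Fin 2) (Fin 2 × Fin 2) ℂ := Matrix.reindex eee.symm eee.symm U4
def Vp : Matrix (Fin 2 × Fin 2) (Fin 2 × Fin 2) ℂ := Matrix.reindex eee.symm eee.symm V4
def Dp (θ : ℝ) : Matrix (Fin 2 × Fin 2) (Fin 2 × Fin 2) ℂ := diagonal (fun p => dvec θ (eee p))

lemma reindex_Up : Matrix.reindex eee eee Up = U4 := by
  rw [Up, ← Matrix.reindex_symm]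
  exact (Matrix.reindex eee eee).apply_symm_apply U4

lemma reindex_Vp : Matrix.reindex eee eee Vp = V4 := by
  rw [Vp, ← Matrix.reindex_symm]
  exact (Matrix.reindex eee eee).apply_symm_apply V4

lemma reindex_mul (A B : Matrix (Fin 2 × Fin 2) (Fin 2 × Fin 2) ℂ) :
    Matrix.reindex eee eee (A * B) = Matrix.reindex eee eee A * Matrix.reindex eee eee B := by
  simp [Matrix.reindex_apply, Matrix.submatrix_mul_equiv]

lemma reindex_inj {A B : Matrix (Fin 2 × Fin 2) (Fin 2 × Fin 2) ℂ}
    (h : Matrix.reindex eee eee A = Matrix.reindex eee eee B) : A = B :=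
  (Matrix.reindex eee eee).injective h

lemma reindex_diag (v : Fin 4 → ℂ) :
    Matrix.reindex eee eee (diagonal (fun p => v (eee p))) = diagonal v := by
  rw [Matrix.reindex_apply, Matrix.submatrix_diagonal_equiv]
  have h : ((fun p => v (eee p)) ∘ ⇑eee.symm) = v := by
    funext x
    exact congrArg v (Equiv.apply_symm_apply eee x)
  rw [h]

lemma hU4V4 : U4 * V4 = 1 := by
  ext i j
  fin_cases i <;> fin_cases j <;>
    simp [U4, V4, mul_apply, Fin.sum_univ_four, Matrix.one_apply, vecHead, vecTail] <;>
    try (ring_nf; try simp [Complex.I_sq]; try ring_nf)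

lemma hV4U4 : V4 * U4 = 1 := by
  ext i j
  fin_cases i <;> fin_cases j <;>
    simp [U4, V4, mul_apply, Fin.sum_univ_four, Matrix.one_apply, vecHead, vecTail] <;>
    try (ring_nf; try simp [Complex.I_sq]; try ring_nf)

lemma reindex_one : Matrix.reindex eee eee (1 : Matrix (Fin 2 × Fin 2) (Fin 2 × Fin 2) ℂ) = 1 := by
  rw [Matrix.reindex_apply, Matrix.submatrix_one_equiv]

lemma hUpVp : Up * Vp = 1 := by
  apply reindex_inj
  rw [reindex_mul, reindex_Up, reindex_Vp, hU4V4, reindex_one]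

lemma hVpUp : Vp * Up = 1 := by
  apply reindex_inj
  rw [reindex_mul, reindex_Up, reindex_Vp, hV4U4, reindex_one]

def Uu : (Matrix (Fin 2 × Fin 2) (Fin 2 × Fin 2) ℂ)ˣ := ⟨Up, Vp, hUpVp, hVpUp⟩

lemma UDV (θ : ℝ) : U4 * diagonal (dvec θ) * V4 =
    !![0,0,0,0; 0,0,-(θ:ℂ),0; 0,(θ:ℂ),0,0; 0,0,0,0] := by
  ext i j
  fin_cases i <;> fin_cases j <;>
    simp [U4, V4, dvec, mul_apply, Fin.sum_univ_four, diagonal_apply,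
      Matrix.vecMul_diagonal, vecHead, vecTail] <;>
    try (ring_nf; try simp [Complex.I_sq]; try ring_nf)

lemma key_decomp (θ : ℝ) :
    ((-(Complex.I * ((θ : ℂ) / 2))) • (PauliY ⊗ₖ PauliX - PauliX ⊗ₖ PauliY)) =
      Up * Dp θ * Vp := by
  apply reindex_inj
  rw [reindex_mul, reindex_mul, reindex_Up, reindex_Vp, Dp, reindex_diag, reindex_entries,
    UDV]
  ext i j
  fin_cases i <;> fin_cases j <;>
    simp [PauliX, PauliY, kroneckerMap_apply, vecHead, vecTail] <;>
    try (ring_nf; try simp [Complex.I_sq]; try ring_nf)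

lemma exp_eq (θ : ℝ) :
    NormedSpace.exp ((-(Complex.I * ((θ : ℂ) / 2))) • (PauliY ⊗ₖ PauliX - PauliX ⊗ₖ PauliY)) =
      Up * diagonal (fun p => Complex.exp (dvec θ (eee p))) * Vp := by
  rw [key_decomp θ]
  have h1 : (↑Uu : Matrix (Fin 2 × Fin 2) (Fin 2 × Fin 2) ℂ) = Up := rfl
  have h2 : (↑Uu⁻¹ : Matrix (Fin 2 × Fin 2) (Fin 2 × Fin 2) ℂ) = Vp := rfl
  rw [← h1, ← h2, Matrix.exp_units_conj Uu, Dp, Matrix.exp_diagonal, h1, h2]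
  congr 2
  funext p
  rw [Pi.exp_def]
  simp [← Complex.exp_eq_exp_ℂ]

lemma expI1 (θ : ℝ) : Complex.exp ((θ:ℂ) * I) = (Real.cos θ : ℂ) + (Real.sin θ : ℂ) * I := by
  rw [Complex.exp_mul_I, Complex.ofReal_cos, Complex.ofReal_sin]

lemma expI2 (θ : ℝ) : Complex.exp (I * (θ:ℂ)) = (Real.cos θ : ℂ) + (Real.sin θ : ℂ) * I := by
  rw [mul_comm]; exact expI1 θ

lemma expI3 (θ : ℝ) : Complex.exp (-((θ:ℂ) * I)) = (Real.cos θ : ℂ) - (Real.sin θ : ℂ) * I := by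
  rw [show -((θ:ℂ) * I) = ((-θ : ℝ) : ℂ) * I by push_cast; ring, expI1]
  push_cast [Real.cos_neg, Real.sin_neg]; ring

lemma expI4 (θ : ℝ) : Complex.exp (-(I * (θ:ℂ))) = (Real.cos θ : ℂ) - (Real.sin θ : ℂ) * I := by
  rw [mul_comm]; exact expI3 θ

lemma expI5 (θ : ℝ) : Complex.exp ((-θ:ℂ) * I) = (Real.cos θ : ℂ) - (Real.sin θ : ℂ) * I := by
  rw [show ((-θ:ℂ)) * I = -((θ:ℂ) * I) by ring]; exact expI3 θ

lemma UEV (θ : ℝ) :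
    U4 * diagonal (fun x => Complex.exp (dvec θ x)) * V4 =
      !![1, 0, 0, 0;
         0, (Real.cos θ : ℂ), -(Real.sin θ : ℂ), 0;
         0, (Real.sin θ : ℂ), (Real.cos θ : ℂ), 0;
         0, 0, 0, 1] := by
  ext i j
  fin_cases i <;> fin_cases j <;>
    simp [U4, V4, dvec, mul_apply, Fin.sum_univ_four, diagonal_apply,
      Matrix.vecMul_diagonal, vecHead, vecTail, expI1, expI2, expI3, expI4, expI5] <;>
    try (ring_nf; try simp [Complex.I_sq]; try ring_nf)

end

end RBSAux

/-- Closed form of the reconfigurable beam splitter gate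
`RBS(θ) = exp(−i(θ/2)(Y⊗X − X⊗Y))`, expressed in the Kronecker-product basis
ordered `|00⟩, |01⟩, |10⟩, |11⟩`. -/
theorem rbs_gate_closed_form (θ : ℝ) :
    Matrix.reindex (finProdFinEquiv.trans (finCongr (by norm_num)))
        (finProdFinEquiv.trans (finCongr (by norm_num)))
        (NormedSpace.exp ((-(Complex.I * ((θ : ℂ) / 2))) •
          (PauliY ⊗ₖ PauliX - PauliX ⊗ₖ PauliY))) =
      !![1, 0, 0, 0;
         0, (Real.cos θ : ℂ), -(Real.sin θ : ℂ), 0;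
         0, (Real.sin θ : ℂ), (Real.cos θ : ℂ), 0;
         0, 0, 0, 1] := by
  rw [show (finProdFinEquiv.trans (finCongr (by norm_num)) : Fin 2 × Fin 2 ≃ Fin 4)
        = RBSAux.eee from rfl,
    RBSAux.exp_eq θ, RBSAux.reindex_mul, RBSAux.reindex_mul, RBSAux.reindex_Up,
    RBSAux.reindex_Vp, RBSAux.reindex_diag (fun x => Complex.exp (RBSAux.dvec θ x)), RBSAux.UEV]
end
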